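/- arXiv:2505.18481 — 2 statements merged into one kernel-verified Lean document; each statement's English description precedes it below -/
import Mathlib

section
/- Let G : ℝ → ℝ be continuous, strictly increasing, with limits G(±∞) = ±C for some C > 0, and let ρ(m,K,·) be the Gaussian density with mean m and variance K > 0. If 0 < A < C, then there exists a unique m ∈ ℝ such that ∫_ℝ G(y) ρ(m,K,y) dy = A. -/
set_option maxHeartbeats 1000000
open MeasureTheory Real Filter

/-- Gaussian density with mean `m` and variance `K` at `y`. -/
noncomputable def gaussρ (m K y : ℝ) : ℝ :=
  (2 * Real.pi * K) ^ (-(1:ℝ)/2) * Real.exp (-((y - m) ^ 2) / (2 * K))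

theorem stmt8 (G : ℝ → ℝ) (C A K : ℝ) (hC : 0 < C) (hK : 0 < K)
    (hGc : Continuous G) (hGm : StrictMono G)
    (htop : Filter.Tendsto G Filter.atTop (nhds C))
    (hbot : Filter.Tendsto G Filter.atBot (nhds (-C)))
    (hA0 : 0 < A) (hAC : A < C) :
    ∃! m : ℝ, (∫ y : ℝ, G y * gaussρ m K y) = A := by
  set c : ℝ := (2 * Real.pi * K) ^ (-(1:ℝ)/2) with hc
  have h2K : (0:ℝ) < 2 * Real.pi * K := by positivity
  have hcpos : 0 < c := Real.rpow_pos_of_pos h2K _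
  set φ : ℝ → ℝ := fun z => c * Real.exp (-(z ^ 2) / (2 * K)) with hφ
  have hφpos : ∀ z, 0 < φ z := fun z => by positivity
  have hφcont : Continuous φ := by continuity
  -- integrability of φ
  have hφint : Integrable φ := by
    have h := (integrable_exp_neg_mul_sq (b := (2*K)⁻¹) (by positivity)).const_mul c
    refine h.congr (Filter.Eventually.of_forall fun z => ?_)
    show c * Real.exp (-(2*K)⁻¹ * z ^ 2) = c * Real.exp (-(z ^ 2) / (2 * K))
    rw [div_eq_mul_inv]
    ring_nf
  -- ∫ φ = 1
  have hφone : (∫ z, φ z) = 1 := by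
    have h := integral_gaussian ((2*K)⁻¹)
    have heq : (∫ z, φ z) = c * ∫ x, Real.exp (-(2*K)⁻¹ * x ^ 2) := by
      rw [← integral_const_mul]
      congr 1 with z
      show c * Real.exp (-(z ^ 2) / (2 * K)) = c * Real.exp (-(2*K)⁻¹ * z ^ 2)
      rw [div_eq_mul_inv]
      ring_nf
    rw [heq, h]
    have : Real.sqrt (Real.pi / (2*K)⁻¹) = (2 * Real.pi * K) ^ ((1:ℝ)/2) := by
      rw [Real.sqrt_eq_rpow]
      congr 1
      field_simp
    rw [this, hc, ← Real.rpow_add h2K]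
    norm_num
  -- bound on G
  have hGb : ∀ y, |G y| ≤ C := by
    intro y
    rw [abs_le]
    constructor
    · exact le_of_tendsto hbot (eventually_atBot.2 ⟨y, fun x hx => hGm.monotone hx⟩)
    · exact ge_of_tendsto htop (eventually_atTop.2 ⟨y, fun x hx => hGm.monotone hx⟩)
  -- F m = shifted integral
  set F : ℝ → ℝ := fun m => ∫ z, G (z + m) * φ z with hF
  have hmeas : ∀ m : ℝ, AEStronglyMeasurable (fun z => G (z + m) * φ z) volume := by
    intro m
    exact ((hGc.comp (continuous_id.add continuous_const)).mul hφcont).aestronglyMeasurable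
  have hbound : ∀ m : ℝ, ∀ᵐ z : ℝ, ‖G (z + m) * φ z‖ ≤ C * φ z := by
    intro m
    refine Filter.Eventually.of_forall fun z => ?_
    rw [norm_mul, Real.norm_eq_abs, Real.norm_eq_abs, abs_of_pos (hφpos z)]
    exact mul_le_mul_of_nonneg_right (hGb _) (hφpos z).le
  have hCφint : Integrable (fun z => C * φ z) := hφint.const_mul C
  have hint : ∀ m : ℝ, Integrable (fun z => G (z + m) * φ z) := by
    intro m
    exact hφint.bdd_mul ((hGc.comp (continuous_id.add continuous_const)).aestronglyMeasurable)
      (c := C) (Filter.Eventually.of_forall fun z => by rw [Real.norm_eq_abs]; exact hGb _)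
  -- original integral equals F m
  have hFeq : ∀ m : ℝ, (∫ y : ℝ, G y * gaussρ m K y) = F m := by
    intro m
    have : (∫ y : ℝ, G y * gaussρ m K y) = ∫ y : ℝ, G y * φ (y - m) := by
      rfl
    have h2 : (∫ z : ℝ, G (z + m) * φ (z + m - m)) = ∫ y : ℝ, G y * φ (y - m) :=
      MeasureTheory.integral_add_right_eq_self (fun y => G y * φ (y - m)) m
    simp only [add_sub_cancel_right] at h2
    rw [this, ← h2]
  -- F continuous
  have hFcont : Continuous F := by
    refine continuous_of_dominated hmeas hbound hCφint ?_
    refine Filter.Eventually.of_forall fun z => ?_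
    exact (hGc.comp (continuous_const.add continuous_id)).mul continuous_const
  -- F strictly monotone
  have hFmono : StrictMono F := by
    intro m₁ m₂ hm
    have hkey : 0 < ∫ z, (G (z + m₂) - G (z + m₁)) * φ z := by
      rw [MeasureTheory.integral_pos_iff_support_of_nonneg]
      · have hsupp : (Function.support fun z => (G (z + m₂) - G (z + m₁)) * φ z) = Set.univ := by
          refine Set.eq_univ_of_forall fun z => ?_
          have := hGm (by linarith : z + m₁ < z + m₂)
          exact ne_of_gt (mul_pos (by linarith) (hφpos z))
        rw [hsupp]
        simp
      · intro z
        have := hGm (by linarith : z + m₁ < z + m₂)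
        exact le_of_lt (mul_pos (by linarith) (hφpos z))
      · have := (hint m₂).sub (hint m₁)
        refine this.congr (Filter.Eventually.of_forall fun z => ?_)
        simp only [Pi.sub_apply]
        ring
    have : F m₂ - F m₁ = ∫ z, (G (z + m₂) - G (z + m₁)) * φ z := by
      rw [hF]
      rw [← MeasureTheory.integral_sub (hint m₂) (hint m₁)]
      congr 1 with z
      ring
    linarith
  -- limits
  have hφCint2 : Integrable (fun z => C * φ z) := hCφint
  have hFtop : Tendsto F atTop (nhds C) := by
    have h := MeasureTheory.tendsto_integral_filter_of_dominated_convergence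
      (μ := volume) (l := atTop) (F := fun m z => G (z + m) * φ z) (f := fun z => C * φ z)
      (fun z => C * φ z)
      (Filter.Eventually.of_forall hmeas)
      (Filter.Eventually.of_forall hbound) hCφint ?_
    · have : (∫ z, C * φ z) = C := by rw [integral_const_mul, hφone, mul_one]
      rwa [this] at h
    · refine Filter.Eventually.of_forall fun z => ?_
      have hz : Tendsto (fun m : ℝ => z + m) atTop atTop := tendsto_atTop_add_const_left _ _ tendsto_id
      exact (htop.comp hz).mul_const _
  have hFbot : Tendsto F atBot (nhds (-C)) := by
    have h := MeasureTheory.tendsto_integral_filter_of_dominated_convergence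
      (μ := volume) (l := atBot) (F := fun m z => G (z + m) * φ z) (f := fun z => (-C) * φ z)
      (fun z => C * φ z)
      (Filter.Eventually.of_forall hmeas)
      (Filter.Eventually.of_forall hbound) hCφint ?_
    · have : (∫ z, (-C) * φ z) = -C := by rw [integral_const_mul, hφone, mul_one]
      rwa [this] at h
    · refine Filter.Eventually.of_forall fun z => ?_
      have hz : Tendsto (fun m : ℝ => z + m) atBot atBot := tendsto_atBot_add_const_left _ _ tendsto_id
      exact (hbot.comp hz).mul_const _
  -- existence
  obtain ⟨b, hb⟩ := (hFtop.eventually (eventually_gt_nhds hAC)).exists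
  obtain ⟨a, ha⟩ := (hFbot.eventually (eventually_lt_nhds (by linarith : -C < A))).exists
  have hab : a < b := hFmono.lt_iff_lt.mp (by linarith)
  have hsub : Set.Icc (F a) (F b) ⊆ F '' Set.Icc a b :=
    intermediate_value_Icc hab.le hFcont.continuousOn
  obtain ⟨m, _, hm⟩ := hsub ⟨ha.le, hb.le⟩
  refine ⟨m, ?_, ?_⟩
  · show (∫ y : ℝ, G y * gaussρ m K y) = A
    rw [hFeq]; exact hm
  · intro m' hm'
    have hm'2 : (∫ y : ℝ, G y * gaussρ m' K y) = A := hm'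
    rw [hFeq] at hm'2
    exact hFmono.injective (by rw [hm'2, hm])
end

section
/- Let G : ℝ → ℝ be bounded, measurable, and strictly increasing, and ρ(m,K,y) the Gaussian density with mean m and variance K > 0. Then the function m ↦ ∫_ℝ G(y) ρ(m,K,y) dy is strictly increasing and differentiable, with derivative ∫_ℝ G(y)·((y−m)/K)·ρ(m,K,y) dy > 0. -/
open MeasureTheory Real Set Filter

lemma int_exp {b : ℝ} (hb : 0 < b) : Integrable (fun z : ℝ => Real.exp (-(z ^ 2) / b)) := by
  have h := integrable_exp_neg_mul_sq (show (0:ℝ) < b⁻¹ by positivity)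
  have he : (fun z : ℝ => Real.exp (-(z ^ 2) / b)) = fun z : ℝ => Real.exp (-b⁻¹ * z ^ 2) := by
    funext z; congr 1; ring
  rw [he]; exact h

lemma int_exp_shift {b : ℝ} (hb : 0 < b) (m : ℝ) :
    Integrable (fun y : ℝ => Real.exp (-((y - m) ^ 2) / b)) :=
  (int_exp hb).comp_sub_right m

lemma gaussρ_pos {K : ℝ} (hK : 0 < K) (m y : ℝ) : 0 < gaussρ m K y := by
  unfold gaussρ
  have h2 : (0:ℝ) < 2 * Real.pi * K := by positivity
  positivity

lemma gauss_int {K : ℝ} (hK : 0 < K) (m : ℝ) : Integrable (fun y => gaussρ m K y) := by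
  have h := (int_exp_shift (show (0:ℝ) < 2 * K by positivity) m).const_mul
    ((2 * Real.pi * K) ^ (-(1:ℝ)/2))
  exact h

lemma gauss_hasDerivAt {K : ℝ} (hK : 0 < K) (y m : ℝ) :
    HasDerivAt (fun m' => gaussρ m' K y) ((y - m) / K * gaussρ m K y) m := by
  have h1 : HasDerivAt (fun m' : ℝ => y - m') (-1) m := by
    simpa using (hasDerivAt_id m).const_sub y
  have h0 : HasDerivAt (fun m' : ℝ => -((y - m') ^ 2) / (2 * K)) ((y - m) / K) m := by
    have h2 := ((h1.pow 2).neg).div_const (2 * K)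
    refine h2.congr_deriv ?_
    ring
  have h3 := (h0.exp).const_mul ((2 * Real.pi * K) ^ (-(1:ℝ)/2))
  have heq : (y - m) / K * gaussρ m K y
      = (2 * Real.pi * K) ^ (-(1:ℝ)/2) * (Real.exp (-((y - m) ^ 2) / (2 * K)) * ((y - m) / K)) := by
    unfold gaussρ; ring
  rw [heq]
  exact h3

lemma key_bound {K : ℝ} (hK : 0 < K) {m m₀ : ℝ} (hm : |m - m₀| < 1) (y : ℝ) :
    |y - m| * Real.exp (-((y - m) ^ 2) / (2 * K)) ≤
      Real.sqrt K * Real.exp (1 / (4 * K)) * Real.exp (-((y - m₀) ^ 2) / (8 * K)) := by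
  have hsK : 0 < Real.sqrt K := Real.sqrt_pos.mpr hK
  have hsq : Real.sqrt K ^ 2 = K := Real.sq_sqrt hK.le
  have h1 : |y - m| ≤ Real.sqrt K * Real.exp ((y - m) ^ 2 / (4 * K)) := by
    have h2 : |y - m| ≤ Real.sqrt K * (1 + (y - m) ^ 2 / (4 * K)) := by
      rw [← sub_nonneg]
      have h3 : Real.sqrt K * (1 + (y - m) ^ 2 / (4 * K)) - |y - m|
          = (Real.sqrt K * (4 * K) + Real.sqrt K * (y - m) ^ 2 - 4 * K * |y - m|) / (4 * K) := by
        field_simp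
      rw [h3]
      apply div_nonneg _ (by positivity)
      nlinarith [sq_nonneg (|y - m| - 2 * Real.sqrt K), sq_abs (y - m), hsK.le]
    refine h2.trans ?_
    gcongr
    rw [add_comm]
    exact Real.add_one_le_exp _
  have e1 : |y - m| * Real.exp (-((y - m) ^ 2) / (2 * K))
      ≤ Real.sqrt K * Real.exp (-((y - m) ^ 2) / (4 * K)) := by
    have h4 := mul_le_mul_of_nonneg_right h1 (Real.exp_pos (-((y - m) ^ 2) / (2 * K))).le
    refine h4.trans_eq ?_
    rw [mul_assoc, ← Real.exp_add]
    congr 1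
    field_simp
    ring
  have e2 : Real.exp (-((y - m) ^ 2) / (4 * K))
      ≤ Real.exp (1 / (4 * K)) * Real.exp (-((y - m₀) ^ 2) / (8 * K)) := by
    rw [← Real.exp_add]
    apply Real.exp_le_exp.mpr
    have hd : (m - m₀) ^ 2 < 1 := by
      nlinarith [abs_nonneg (m - m₀), sq_abs (m - m₀), hm]
    have h5 : (y - m₀) ^ 2 / 2 - 1 ≤ (y - m) ^ 2 := by
      nlinarith [sq_nonneg (y - m₀ - 2 * (m - m₀))]
    have h6 : 1 / (4 * K) + -((y - m₀) ^ 2) / (8 * K) - (-((y - m) ^ 2) / (4 * K))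
        = ((y - m) ^ 2 - ((y - m₀) ^ 2 / 2 - 1)) / (4 * K) := by
      field_simp; ring
    have h7 : (0:ℝ) ≤ ((y - m) ^ 2 - ((y - m₀) ^ 2 / 2 - 1)) / (4 * K) :=
      div_nonneg (by linarith) (by positivity)
    linarith [h6 ▸ h7]
  calc |y - m| * Real.exp (-((y - m) ^ 2) / (2 * K))
      ≤ Real.sqrt K * Real.exp (-((y - m) ^ 2) / (4 * K)) := e1
    _ ≤ Real.sqrt K * (Real.exp (1 / (4 * K)) * Real.exp (-((y - m₀) ^ 2) / (8 * K))) := by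
        gcongr
    _ = Real.sqrt K * Real.exp (1 / (4 * K)) * Real.exp (-((y - m₀) ^ 2) / (8 * K)) := by ring

lemma norm_bound {K : ℝ} (hK : 0 < K) {B : ℝ} {G : ℝ → ℝ} (hB : ∀ z, |G z| ≤ B)
    {m m₀ : ℝ} (hm : |m - m₀| < 1) (y : ℝ) :
    ‖G y * ((y - m) / K) * gaussρ m K y‖ ≤
      B * (Real.sqrt K * Real.exp (1 / (4 * K)) * ((2 * Real.pi * K) ^ (-(1:ℝ)/2) / K)) *
        Real.exp (-((y - m₀) ^ 2) / (8 * K)) := by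
  have hcpos : (0:ℝ) < (2 * Real.pi * K) ^ (-(1:ℝ)/2) := by
    have h2 : (0:ℝ) < 2 * Real.pi * K := by positivity
    positivity
  have hB0 : 0 ≤ B := le_trans (abs_nonneg _) (hB 0)
  have habs : ‖G y * ((y - m) / K) * gaussρ m K y‖
      = |G y| * ((|y - m| * Real.exp (-((y - m) ^ 2) / (2 * K)))
          * ((2 * Real.pi * K) ^ (-(1:ℝ)/2) / K)) := by
    rw [Real.norm_eq_abs, abs_mul, abs_mul, abs_div, abs_of_pos hK]
    unfold gaussρ
    rw [abs_mul, abs_of_pos hcpos, abs_of_pos (Real.exp_pos _)]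
    ring
  rw [habs]
  calc |G y| * ((|y - m| * Real.exp (-((y - m) ^ 2) / (2 * K)))
          * ((2 * Real.pi * K) ^ (-(1:ℝ)/2) / K))
      ≤ B * ((Real.sqrt K * Real.exp (1 / (4 * K)) * Real.exp (-((y - m₀) ^ 2) / (8 * K)))
          * ((2 * Real.pi * K) ^ (-(1:ℝ)/2) / K)) := by
        refine mul_le_mul (hB y)
          (mul_le_mul_of_nonneg_right (key_bound hK hm y) (div_pos hcpos hK).le)
          (by positivity) (le_trans (abs_nonneg _) (hB 0))
    _ = B * (Real.sqrt K * Real.exp (1 / (4 * K)) * ((2 * Real.pi * K) ^ (-(1:ℝ)/2) / K)) *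
        Real.exp (-((y - m₀) ^ 2) / (8 * K)) := by ring

theorem stmt9 (G : ℝ → ℝ) (K : ℝ) (hK : 0 < K)
    (hGmeas : Measurable G) (hGbdd : ∃ B, ∀ z, |G z| ≤ B) (hGm : StrictMono G) :
    StrictMono (fun m => ∫ y : ℝ, G y * gaussρ m K y) ∧
    ∀ m : ℝ,
      HasDerivAt (fun m' => ∫ y : ℝ, G y * gaussρ m' K y)
        (∫ y : ℝ, G y * ((y - m) / K) * gaussρ m K y) m ∧
      0 < ∫ y : ℝ, G y * ((y - m) / K) * gaussρ m K y := by
  obtain ⟨B, hB⟩ := hGbdd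
  have hB0 : 0 ≤ B := le_trans (abs_nonneg _) (hB 0)
  have hmeasρ : ∀ m, Measurable fun y => gaussρ m K y := by
    intro m; unfold gaussρ; fun_prop
  have hInt : ∀ m, Integrable fun y => G y * gaussρ m K y := by
    intro m
    exact Integrable.bdd_mul (c := B) (gauss_int hK m) hGmeas.aestronglyMeasurable
      (ae_of_all _ fun y => by simpa using hB y)
  -- derivative + integrability of derivative integrand
  have hderiv : ∀ m₀ : ℝ,
      Integrable (fun y => G y * ((y - m₀) / K) * gaussρ m₀ K y) ∧
      HasDerivAt (fun m' => ∫ y : ℝ, G y * gaussρ m' K y)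
        (∫ y : ℝ, G y * ((y - m₀) / K) * gaussρ m₀ K y) m₀ := by
    intro m₀
    refine hasDerivAt_integral_of_dominated_loc_of_deriv_le
      (F := fun m y => G y * gaussρ m K y)
      (F' := fun m y => G y * ((y - m) / K) * gaussρ m K y)
      (bound := fun y =>
        B * (Real.sqrt K * Real.exp (1 / (4 * K)) * ((2 * Real.pi * K) ^ (-(1:ℝ)/2) / K)) *
          Real.exp (-((y - m₀) ^ 2) / (8 * K)))
      (Metric.ball_mem_nhds m₀ one_pos)
      (Eventually.of_forall fun m => (hGmeas.mul (hmeasρ m)).aestronglyMeasurable)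
      (hInt m₀)
      (((hGmeas.mul (by fun_prop : Measurable fun y : ℝ => (y - m₀) / K)).mul
        (hmeasρ m₀)).aestronglyMeasurable)
      ?_ ?_ ?_
    · refine Eventually.of_forall fun y m hm => ?_
      have hm' : |m - m₀| < 1 := by rwa [Metric.mem_ball, Real.dist_eq] at hm
      exact norm_bound hK hB hm' y
    · exact ((int_exp_shift (show (0:ℝ) < 8 * K by positivity) m₀).const_mul _)
    · refine Eventually.of_forall fun y m hm => ?_
      have h := (gauss_hasDerivAt hK y m).const_mul (G y)
      simpa only [mul_assoc] using h
  -- positivity of the derivative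
  have hpos : ∀ m : ℝ, 0 < ∫ y : ℝ, G y * ((y - m) / K) * gaussρ m K y := by
    intro m
    obtain ⟨hD, _⟩ := hderiv m
    set h : ℝ → ℝ := fun z => G (z + m) * ((z + m - m) / K) * gaussρ m K (z + m) with hh
    have hInth : Integrable h := hD.comp_add_right m
    have hIntneg : Integrable fun z => h (-z) := hInth.comp_neg
    have htrans : (∫ y : ℝ, G y * ((y - m) / K) * gaussρ m K y) = ∫ z, h z :=
      (integral_add_right_eq_self (fun y => G y * ((y - m) / K) * gaussρ m K y) m).symm
    have hposz : ∀ z : ℝ, 0 < z → 0 < h (-z) + h z := by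
      intro z hz
      have hρeq : gaussρ m K (-z + m) = gaussρ m K (z + m) := by
        unfold gaussρ; ring_nf
      have hGlt : G (-z + m) < G (z + m) := hGm (by linarith)
      have hρ := gaussρ_pos hK m (z + m)
      have h1 : h (-z) + h z = z / K * gaussρ m K (z + m) * (G (z + m) - G (-z + m)) := by
        simp only [hh, hρeq]; ring
      rw [h1]
      exact mul_pos (mul_pos (div_pos hz hK) hρ) (sub_pos.mpr hGlt)
    have hsplit : (∫ z, h z) = (∫ z in Iic (0:ℝ), h z) + ∫ z in Ioi (0:ℝ), h z :=
      (intervalIntegral.integral_Iic_add_Ioi hInth.integrableOn hInth.integrableOn).symm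
    have hrefl : (∫ z in Iic (0:ℝ), h z) = ∫ z in Ioi (0:ℝ), h (-z) := by
      have h2 := integral_comp_neg_Ioi (0:ℝ) h
      rw [neg_zero] at h2
      exact h2.symm
    have hadd : (∫ z in Ioi (0:ℝ), h (-z)) + (∫ z in Ioi (0:ℝ), h z)
        = ∫ z in Ioi (0:ℝ), (h (-z) + h z) :=
      (integral_add hIntneg.integrableOn hInth.integrableOn).symm
    have hfin : 0 < ∫ z in Ioi (0:ℝ), (h (-z) + h z) := by
      rw [setIntegral_pos_iff_support_of_nonneg_ae
        ((ae_restrict_iff' measurableSet_Ioi).mpr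
          (ae_of_all _ fun z hz => (hposz z hz).le))
        (hIntneg.add hInth).integrableOn]
      have hsub : Ioi (0:ℝ) ⊆ Function.support fun z => h (-z) + h z := fun z hz =>
        ne_of_gt (hposz z hz)
      rw [Set.inter_eq_right.mpr hsub, Real.volume_Ioi]
      exact ENNReal.zero_lt_top
    rw [htrans, hsplit, hrefl, hadd]
    exact hfin
  -- strict monotonicity
  have hmono : StrictMono fun m => ∫ y : ℝ, G y * gaussρ m K y := by
    intro m m' hmm'
    dsimp only
    have trans : ∀ mm : ℝ, (∫ y : ℝ, G y * gaussρ mm K y) = ∫ z, G (z + mm) * gaussρ 0 K z := by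
      intro mm
      rw [← integral_add_right_eq_self (fun y => G y * gaussρ mm K y) mm]
      congr 1; funext z
      congr 1
      unfold gaussρ; ring_nf
    have hint : ∀ mm : ℝ, Integrable fun z => G (z + mm) * gaussρ 0 K z := by
      intro mm
      exact Integrable.bdd_mul (c := B) (gauss_int hK 0)
        ((hGmeas.comp (measurable_add_const mm)).aestronglyMeasurable)
        (ae_of_all _ fun z => by simpa using hB (z + mm))
    rw [trans m, trans m', ← sub_pos, ← integral_sub (hint m') (hint m)]
    have hptpos : ∀ z : ℝ, 0 < G (z + m') * gaussρ 0 K z - G (z + m) * gaussρ 0 K z := by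
      intro z
      have hGlt : G (z + m) < G (z + m') := hGm (by linarith)
      have hρ := gaussρ_pos hK 0 z
      nlinarith [mul_pos (sub_pos.mpr hGlt) hρ]
    rw [integral_pos_iff_support_of_nonneg_ae
      (ae_of_all _ fun z => (hptpos z).le) ((hint m').sub (hint m))]
    have hsupp : Function.support
        (fun z => G (z + m') * gaussρ 0 K z - G (z + m) * gaussρ 0 K z) = univ := by
      ext z
      simp only [Function.mem_support, mem_univ, iff_true]
      exact ne_of_gt (hptpos z)
    rw [hsupp, Real.volume_univ]
    exact ENNReal.zero_lt_top
  exact ⟨hmono, fun m => ⟨(hderiv m).2, hpos m⟩⟩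
end
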